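/- Let n ≥ 2, k ≥ 1, let m be a natural number satisfying Σ_{a ⊊ n} k · m^{|a|} < mⁿ (where a ranges over proper subsets of {0, …, n−1}), let U_a ⊆ ℝᵏ be open for each proper subset a of {0, …, n−1}, and let f : Π_{a ⊊ n} U_a → ℝ be continuously differentiable. Define F : Π_{a ⊊ n} (U_a)^{(m^{|a|})} → ℝ^{(mⁿ)} by F(⟨x_{a,e} : e ∈ m^{|a|}, a ⊊ n⟩)_h = f(⟨x_{a, h↾a} : a ⊊ n⟩), where the coordinates of ℝ^{(mⁿ)} are indexed by functions h : {0, …, n−1} → {0, …, m−1} and h↾a denotes the restriction of h to a. Then the image of F has Lebesgue measure 0 in ℝ^{(mⁿ)}. -/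
import Mathlib


open MeasureTheory
open scoped ENNReal NNReal

/-- Let `n ≥ 2`, `k ≥ 1` and `m` with `∑_{a ⊊ n} k · m^{|a|} < mⁿ`. Let `U a ⊆ ℝᵏ` be
open for each proper subset `a` of `{0, …, n-1}` and let `f : Π_{a ⊊ n} U a → ℝ` be `C¹`.
Then the map `F : Π_{a ⊊ n} (U a)^{m^{|a|}} → ℝ^{mⁿ}` given by
`F(⟨x_{a,e}⟩)_h = f(⟨x_{a, h↾a}⟩)` (coordinates of `ℝ^{mⁿ}` indexed by `h : n → m`)
has image of Lebesgue measure zero. -/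
theorem measure_image_multigrid_map_eq_zero
    (n k m : ℕ) (hn : 2 ≤ n) (hk : 1 ≤ k)
    (hm : (∑ a ∈ Finset.univ.filter (fun a : Finset (Fin n) => a ≠ Finset.univ),
        k * m ^ a.card) < m ^ n)
    (U : {a : Finset (Fin n) // a ≠ Finset.univ} → Set (Fin k → ℝ))
    (hU : ∀ a, IsOpen (U a))
    (f : ({a : Finset (Fin n) // a ≠ Finset.univ} → (Fin k → ℝ)) → ℝ)
    (hf : ContDiffOn ℝ 1 f {x | ∀ a, x a ∈ U a}) :
    volume ((fun (x : ∀ a : {a : Finset (Fin n) // a ≠ Finset.univ},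
          (↥a.1 → Fin m) → (Fin k → ℝ)) =>
        fun h : Fin n → Fin m => f (fun a => x a (fun i => h ↑i))) ''
      {x | ∀ a e, x a e ∈ U a}) = 0 := by
  set s : Set (∀ a : {a : Finset (Fin n) // a ≠ Finset.univ},
      (↥a.1 → Fin m) → (Fin k → ℝ)) := {x | ∀ a e, x a e ∈ U a} with hs
  set F : (∀ a : {a : Finset (Fin n) // a ≠ Finset.univ},
      (↥a.1 → Fin m) → (Fin k → ℝ)) → ((Fin n → Fin m) → ℝ) :=
    fun x => fun h : Fin n → Fin m => f (fun a => x a (fun i => h ↑i)) with hF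
  -- the linear "restriction" maps
  -- s is open
  have hsopen : IsOpen s := by
    have h1 : s = ⋂ a : {a : Finset (Fin n) // a ≠ Finset.univ}, ⋂ e : (↥a.1 → Fin m),
        (fun x : (∀ a : {a : Finset (Fin n) // a ≠ Finset.univ},
          (↥a.1 → Fin m) → (Fin k → ℝ)) => x a e) ⁻¹' (U a) := by
      ext x
      simp only [hs, Set.mem_setOf_eq, Set.mem_iInter, Set.mem_preimage]
    rw [h1]
    exact isOpen_iInter_of_finite fun a => isOpen_iInter_of_finite fun e =>
      (hU a).preimage ((continuous_apply e).comp (continuous_apply a))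
  -- F is C¹ on s
  have hFs : ContDiffOn ℝ 1 F s := by
    rw [contDiffOn_pi]
    intro h
    let L : (∀ a : {a : Finset (Fin n) // a ≠ Finset.univ}, (↥a.1 → Fin m) → (Fin k → ℝ))
        →L[ℝ] ({a : Finset (Fin n) // a ≠ Finset.univ} → (Fin k → ℝ)) :=
      ContinuousLinearMap.pi (fun a =>
        (ContinuousLinearMap.proj (R := ℝ) (φ := fun _ : (↥a.1 → Fin m) => Fin k → ℝ)
          (fun i : ↥a.1 => h ↑i)).comp (ContinuousLinearMap.proj a))
    have h2 := hf.comp (L.contDiff.contDiffOn (s := s))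
      (fun x hx a => by exact hx a (fun i : ↥a.1 => h ↑i))
    exact h2.congr (fun x _ => rfl)
  -- dimension bound
  have hdim : dimH (F '' s) ≤ (Module.finrank ℝ (∀ a : {a : Finset (Fin n) // a ≠ Finset.univ},
      (↥a.1 → Fin m) → (Fin k → ℝ)) : ℝ≥0∞) := by
    refine le_trans (dimH_image_le_of_locally_lipschitzOn fun x hx => ?_) ?_
    · obtain ⟨K, t, ht, hlip⟩ :=
        ((hFs x hx).contDiffAt (hsopen.mem_nhds hx)).exists_lipschitzOnWith
      exact ⟨K, t, nhdsWithin_le_nhds ht, hlip⟩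
    · calc dimH s ≤ dimH (Set.univ : Set _) := dimH_mono (Set.subset_univ s)
        _ = _ := Real.dimH_univ_eq_finrank _
  -- compute the finrank
  have hrank : Module.finrank ℝ (∀ a : {a : Finset (Fin n) // a ≠ Finset.univ},
        (↥a.1 → Fin m) → (Fin k → ℝ)) =
      ∑ a ∈ Finset.univ.filter (fun a : Finset (Fin n) => a ≠ Finset.univ),
        k * m ^ a.card := by
    rw [Module.finrank_pi_fintype ℝ,
      Finset.sum_subtype (p := fun a : Finset (Fin n) => a ≠ Finset.univ) _ (by simp) (fun a : Finset (Fin n) => k * m ^ a.card)]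
    refine Finset.sum_congr rfl fun a _ => ?_
    rw [Module.finrank_pi_fintype ℝ]
    simp [Module.finrank_pi, Finset.sum_const, Fintype.card_fun, Fintype.card_coe,
      mul_comm]
  -- conclude
  have hcard : Fintype.card (Fin n → Fin m) = m ^ n := by
    simp [Fintype.card_fun]
  have hlt : dimH (F '' s) < ((Fintype.card (Fin n → Fin m) : ℝ≥0) : ℝ≥0∞) := by
    refine lt_of_le_of_lt hdim ?_
    rw [hrank]
    rw [hcard]
    exact_mod_cast hm
  have h0 : μH[(Fintype.card (Fin n → Fin m) : ℝ≥0)] (F '' s) = 0 :=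
    hausdorffMeasure_of_dimH_lt hlt
  rw [← MeasureTheory.hausdorffMeasure_pi_real (ι := Fin n → Fin m)]
  exact_mod_cast h0
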